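/- Let B be a C*-algebra and let D be a hereditary subalgebra of B with associated left ideal L. Let (e_t)_{t∈Λ} be a net in B such that for every t one has e_t* e_t ≤ Re(e_t) := (e_t + e_t*)/2, the real parts satisfy Re(e_t) ∈ D and Re(e_s) ≤ Re(e_t) whenever s ≤ t, and (Re(e_t)) is a contractive approximate identity for D. If x ∈ B lies in the norm closure of L + L*, then ‖(1 − e_t) x (1 − e_t)‖ → 0, where (1 − e_t) x (1 − e_t) denotes x − e_t x − x e_t + e_t x e_t. -/

import Mathlib

open scoped Pointwise
open Filter Topology

/-- `D` is a hereditary subalgebra of the C*-algebra `B`: a norm-closed *-subalgebra such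
that `0 ≤ b ≤ d` with `d ∈ D` implies `b ∈ D`. -/
def IsHereditarySubalgebra {B : Type*} [NonUnitalCStarAlgebra B] [PartialOrder B]
    [StarOrderedRing B] (D : NonUnitalStarSubalgebra ℂ B) : Prop :=
  IsClosed (D : Set B) ∧ ∀ b d : B, d ∈ D → 0 ≤ b → b ≤ d → b ∈ D

/-- The left ideal associated with a hereditary subalgebra `D` of `B`: the norm closure of
the linear span of products `b * d` with `b ∈ B`, `d ∈ D`. -/
def leftIdealOf {B : Type*} [NonUnitalCStarAlgebra B]
    (D : NonUnitalStarSubalgebra ℂ B) : Set B :=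
  closure ((Submodule.span ℂ {x : B | ∃ b : B, ∃ d ∈ D, x = b * d} : Submodule ℂ B) : Set B)

section Aux

variable {A : Type*} [CStarAlgebra A] [PartialOrder A] [StarOrderedRing A]

lemma aux_smul_nonneg {z : A} (hz : 0 ≤ z) {r : ℝ} (hr : 0 ≤ r) : 0 ≤ r • z := by
  have h := star_left_conjugate_nonneg hz (algebraMap ℝ A (Real.sqrt r))
  have hsa : star (algebraMap ℝ A (Real.sqrt r)) = algebraMap ℝ A (Real.sqrt r) := by
    simp [Algebra.algebraMap_eq_smul_one, star_smul]
  rw [hsa] at h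
  rwa [Algebra.algebraMap_eq_smul_one, smul_mul_assoc, mul_smul_comm, one_mul, mul_one,
    smul_smul, Real.mul_self_sqrt hr] at h

lemma aux_quarter {z : A} (hz : 0 ≤ z + z + z + z) : 0 ≤ z := by
  have h4 : ((4 : ℝ)) • z = z + z + z + z := by
    rw [show (4 : ℝ) = 2 + 2 by norm_num, add_smul, two_smul]; abel
  have h := aux_smul_nonneg hz (by norm_num : (0:ℝ) ≤ 1/4)
  rwa [← h4, smul_smul, show (1/4 : ℝ) * 4 = 1 by norm_num, one_smul] at h

lemma aux_one_nonneg : (0 : A) ≤ 1 := by simpa using star_mul_self_nonneg (1 : A)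

lemma aux_key [Nontrivial A] {ε fA : A} (hεf : ε + star ε = fA + fA) (hs : star ε * ε ≤ fA) :
    star (1 - ε) * (1 - ε) ≤ 1 - fA ∧ (1 - ε) * star (1 - ε) ≤ 1 - fA ∧ ‖1 - ε‖ ≤ 1 := by
  have hsaa : star (1 - ε - ε) * (1 - ε - ε) ≤ 1 := by
    have hexp : star (1 - ε - ε) * (1 - ε - ε)
        = 1 - ((ε + star ε) + (ε + star ε)) +
          (star ε * ε + star ε * ε + star ε * ε + star ε * ε) := by
      simp only [star_sub, star_one]; noncomm_ring
    rw [hexp, hεf]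
    calc 1 - ((fA + fA) + (fA + fA)) + (star ε * ε + star ε * ε + star ε * ε + star ε * ε)
        ≤ 1 - ((fA + fA) + (fA + fA)) + (fA + fA + fA + fA) := by
          exact add_le_add_right (add_le_add (add_le_add (add_le_add hs hs) hs) hs) _
      _ = 1 := by abel
  have hnorm_a : ‖1 - ε - ε‖ ≤ 1 := by
    have h0 : (0 : A) ≤ star (1 - ε - ε) * (1 - ε - ε) := star_mul_self_nonneg _
    have h1 : ‖star (1 - ε - ε) * (1 - ε - ε)‖ ≤ 1 := by
      calc ‖star (1 - ε - ε) * (1 - ε - ε)‖ ≤ ‖(1 : A)‖ :=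
            CStarAlgebra.norm_le_norm_of_nonneg_of_le h0 hsaa
        _ = 1 := norm_one
    rw [CStarRing.norm_star_mul_self] at h1
    nlinarith [norm_nonneg (1 - ε - ε)]
  have haas : (1 - ε - ε) * star (1 - ε - ε) ≤ 1 := by
    calc (1 - ε - ε) * star (1 - ε - ε) ≤ algebraMap ℝ A (‖1 - ε - ε‖ ^ 2) :=
          CStarAlgebra.mul_star_le_algebraMap_norm_sq
      _ ≤ 1 := by
          rw [← sub_nonneg, show (1 : A) - algebraMap ℝ A (‖1 - ε - ε‖ ^ 2)
              = algebraMap ℝ A (1 - ‖1 - ε - ε‖ ^ 2) by rw [map_sub, map_one],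
            Algebra.algebraMap_eq_smul_one]
          exact aux_smul_nonneg aux_one_nonneg (by nlinarith [norm_nonneg (1 - ε - ε)])
  have hs' : ε * star ε ≤ fA := by
    have hexp : (1 - ε - ε) * star (1 - ε - ε)
        = 1 - ((ε + star ε) + (ε + star ε)) +
          (ε * star ε + ε * star ε + ε * star ε + ε * star ε) := by
      simp only [star_sub, star_one]; noncomm_ring
    rw [hexp, hεf] at haas
    have h3 : (0 : A) ≤ (fA - ε * star ε) + (fA - ε * star ε) + (fA - ε * star ε)
        + (fA - ε * star ε) := by
      have h4 := sub_nonneg.mpr haas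
      have h5 : (1 : A) - (1 - ((fA + fA) + (fA + fA)) +
          (ε * star ε + ε * star ε + ε * star ε + ε * star ε))
          = (fA - ε * star ε) + (fA - ε * star ε) + (fA - ε * star ε) + (fA - ε * star ε) := by
        abel
      rwa [h5] at h4
    exact sub_nonneg.mp (aux_quarter h3)
  refine ⟨?_, ?_, ?_⟩
  · have hexp : star (1 - ε) * (1 - ε) = 1 - (ε + star ε) + star ε * ε := by
      simp only [star_sub, star_one]; noncomm_ring
    rw [hexp, hεf]
    calc 1 - (fA + fA) + star ε * ε ≤ 1 - (fA + fA) + fA := add_le_add_right hs _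
      _ = 1 - fA := by abel
  · have hexp : (1 - ε) * star (1 - ε) = 1 - (ε + star ε) + ε * star ε := by
      simp only [star_sub, star_one]; noncomm_ring
    rw [hexp, hεf]
    calc 1 - (fA + fA) + ε * star ε ≤ 1 - (fA + fA) + fA := add_le_add_right hs' _
      _ = 1 - fA := by abel
  · have h1 : (1 - ε) + (1 - ε) = 1 + (1 - ε - ε) := by abel
    have h2 : (2 : ℝ) * ‖1 - ε‖ = ‖(1 - ε) + (1 - ε)‖ := by
      rw [← two_smul ℝ (1 - ε), norm_smul]
      simp
    have h3 : ‖(1 : A) + (1 - ε - ε)‖ ≤ 2 := by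
      calc ‖(1 : A) + (1 - ε - ε)‖ ≤ ‖(1 : A)‖ + ‖1 - ε - ε‖ := norm_add_le _ _
        _ ≤ 1 + 1 := by rw [norm_one]; linarith
        _ = 2 := by norm_num
    rw [h1] at h2
    linarith

end Aux

set_option maxHeartbeats 1000000 in
/-- Corollary 5.4 of the paper.  Let `D` be a hereditary subalgebra of
a C*-algebra `B` with associated left ideal `L`, and `(e_t)` a net in `B` with
`e_t* e_t ≤ Re e_t`, whose real parts `Re e_t = (e_t + e_t*)/2` lie in `D`, increase
with `t`, and form a contractive approximate identity for `D`.  If `x` lies in the norm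
closure of `L + L*`, then `‖(1 − e_t) x (1 − e_t)‖ → 0`. -/
theorem stmt_9 {B : Type*} [NonUnitalCStarAlgebra B] [PartialOrder B] [StarOrderedRing B]
    (D : NonUnitalStarSubalgebra ℂ B) (hD : IsHereditarySubalgebra D)
    {Λ : Type*} [Preorder Λ] [IsDirected Λ (· ≤ ·)] [Nonempty Λ]
    (e : Λ → B)
    (hF : ∀ t, star (e t) * e t ≤ (2 : ℂ)⁻¹ • (e t + star (e t)))
    (hreD : ∀ t, (2 : ℂ)⁻¹ • (e t + star (e t)) ∈ D)
    (hmono : ∀ s t : Λ, s ≤ t →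
      (2 : ℂ)⁻¹ • (e s + star (e s)) ≤ (2 : ℂ)⁻¹ • (e t + star (e t)))
    (hre1 : ∀ t, ‖(2 : ℂ)⁻¹ • (e t + star (e t))‖ ≤ 1)
    (hcai₁ : ∀ d ∈ D,
      Tendsto (fun t => ‖((2 : ℂ)⁻¹ • (e t + star (e t))) * d - d‖) atTop (𝓝 0))
    (hcai₂ : ∀ d ∈ D,
      Tendsto (fun t => ‖d * ((2 : ℂ)⁻¹ • (e t + star (e t))) - d‖) atTop (𝓝 0))
    (x : B) (hx : x ∈ closure (leftIdealOf D + star '' leftIdealOf D)) :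
    Tendsto (fun t => ‖x - e t * x - x * e t + e t * x * e t‖) atTop (𝓝 0) := by
  set f : Λ → B := fun t => (2 : ℂ)⁻¹ • (e t + star (e t)) with hfdef
  -- selfadjointness of `f t`
  have hfsa : ∀ t, IsSelfAdjoint (f t) := by
    intro t
    rw [IsSelfAdjoint, hfdef]
    simp only [star_smul, star_add, star_star]
    rw [show (star ((2:ℂ)⁻¹) : ℂ) = (2:ℂ)⁻¹ by simp, add_comm]
  -- key facts in the unitization
  have hεfA : ∀ t, ((e t : Unitization ℂ B)) + star ((e t : Unitization ℂ B))
      = ((f t : B) : Unitization ℂ B) + ((f t : B) : Unitization ℂ B) := by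
    intro t
    have h1 : f t + f t = e t + star (e t) := by
      rw [← two_smul ℂ (f t), hfdef]
      simp only []
      rw [smul_smul]
      norm_num
    rw [← Unitization.inr_add, h1, Unitization.inr_add, Unitization.inr_star]
  have hsA : ∀ t, star ((e t : Unitization ℂ B)) * ((e t : Unitization ℂ B))
      ≤ 1 - (1 - ((f t : B) : Unitization ℂ B)) := by
    intro t
    have h1 := (Unitization.inr_le_iff (star (e t) * e t) (f t)
      (IsSelfAdjoint.star_mul_self (e t)) (hfsa t)).mpr (hF t)
    rw [Unitization.inr_mul, Unitization.inr_star] at h1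
    simpa using h1
  have key : ∀ t, star (1 - ((e t : Unitization ℂ B))) * (1 - ((e t : Unitization ℂ B)))
        ≤ 1 - ((f t : B) : Unitization ℂ B)
      ∧ (1 - ((e t : Unitization ℂ B))) * star (1 - ((e t : Unitization ℂ B)))
        ≤ 1 - ((f t : B) : Unitization ℂ B)
      ∧ ‖1 - ((e t : Unitization ℂ B))‖ ≤ 1 := by
    intro t
    exact aux_key (hεfA t) (by simpa using hsA t)
  -- coercion of the main expression
  have hGcoe : ∀ (t : Λ) (z : B), ((z - e t * z - z * e t + e t * z * e t : B) : Unitization ℂ B)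
      = (1 - (e t : Unitization ℂ B)) * (z : Unitization ℂ B) * (1 - (e t : Unitization ℂ B)) := by
    intro t z
    simp only [Unitization.inr_add, Unitization.inr_sub, Unitization.inr_mul]
    noncomm_ring
  have hGnorm : ∀ (t : Λ) (z : B), ‖z - e t * z - z * e t + e t * z * e t‖
      = ‖(1 - (e t : Unitization ℂ B)) * (z : Unitization ℂ B) * (1 - (e t : Unitization ℂ B))‖ := by
    intro t z
    rw [← hGcoe, Unitization.norm_inr]
  have hGbound : ∀ (t : Λ) (z : B), ‖z - e t * z - z * e t + e t * z * e t‖ ≤ ‖z‖ := by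
    intro t z
    rw [hGnorm]
    have h1 : ‖(1 - (e t : Unitization ℂ B)) * (z : Unitization ℂ B) * (1 - (e t : Unitization ℂ B))‖
        ≤ ‖(1 - (e t : Unitization ℂ B)) * (z : Unitization ℂ B)‖ * ‖1 - (e t : Unitization ℂ B)‖ :=
      norm_mul_le _ _
    have h2 : ‖(1 - (e t : Unitization ℂ B)) * (z : Unitization ℂ B)‖
        ≤ ‖1 - (e t : Unitization ℂ B)‖ * ‖(z : Unitization ℂ B)‖ := norm_mul_le _ _
    have h3 := (key t).2.2
    have h4 : ‖(z : Unitization ℂ B)‖ = ‖z‖ := Unitization.norm_inr z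
    nlinarith [norm_nonneg (1 - (e t : Unitization ℂ B)),
      norm_nonneg ((z : Unitization ℂ B)),
      norm_nonneg ((1 - (e t : Unitization ℂ B)) * (z : Unitization ℂ B))]
  -- the set of good elements
  set S : Set B := {z : B | Tendsto (fun t => ‖z - e t * z - z * e t + e t * z * e t‖)
    atTop (𝓝 0)} with hSdef
  -- decay lemmas
  have decayR : ∀ d : B, d ∈ D →
      Tendsto (fun t => ‖(d : Unitization ℂ B) * (1 - (e t : Unitization ℂ B))‖) atTop (𝓝 0) := by
    intro d hd
    have hb : ∀ t, ‖(d : Unitization ℂ B) * (1 - (e t : Unitization ℂ B))‖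
        ≤ Real.sqrt (‖d * f t - d‖ * ‖d‖) := by
      intro t
      rw [← Real.sqrt_sq (norm_nonneg ((d : Unitization ℂ B) * (1 - (e t : Unitization ℂ B))))]
      apply Real.sqrt_le_sqrt
      set u : Unitization ℂ B := 1 - (e t : Unitization ℂ B) with hu
      have heq : ((d : Unitization ℂ B) * u) * star ((d : Unitization ℂ B) * u)
          = (d : Unitization ℂ B) * (u * star u) * star (d : Unitization ℂ B) := by
        rw [star_mul]; noncomm_ring
      have h0 : (0 : Unitization ℂ B)
          ≤ (d : Unitization ℂ B) * (u * star u) * star (d : Unitization ℂ B) :=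
        star_right_conjugate_nonneg (mul_star_self_nonneg u) _
      have hle : (d : Unitization ℂ B) * (u * star u) * star (d : Unitization ℂ B)
          ≤ (d : Unitization ℂ B) * (1 - ((f t : B) : Unitization ℂ B)) * star (d : Unitization ℂ B) :=
        star_right_conjugate_le_conjugate (key t).2.1 _
      have h1 : ‖(d : Unitization ℂ B) * u‖ ^ 2
          = ‖(d : Unitization ℂ B) * (u * star u) * star (d : Unitization ℂ B)‖ := by
        rw [← heq, CStarRing.norm_self_mul_star, pow_two]
      rw [h1]
      calc ‖(d : Unitization ℂ B) * (u * star u) * star (d : Unitization ℂ B)‖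
          ≤ ‖(d : Unitization ℂ B) * (1 - ((f t : B) : Unitization ℂ B))
            * star (d : Unitization ℂ B)‖ :=
            CStarAlgebra.norm_le_norm_of_nonneg_of_le h0 hle
        _ ≤ ‖(d : Unitization ℂ B) * (1 - ((f t : B) : Unitization ℂ B))‖
            * ‖star (d : Unitization ℂ B)‖ := norm_mul_le _ _
        _ = ‖d * f t - d‖ * ‖d‖ := by
            rw [show (d : Unitization ℂ B) * (1 - ((f t : B) : Unitization ℂ B))
                = ((d - d * f t : B) : Unitization ℂ B) by
              rw [Unitization.inr_sub, Unitization.inr_mul]; noncomm_ring]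
            rw [Unitization.norm_inr, norm_star, Unitization.norm_inr, norm_sub_rev]
    apply squeeze_zero (fun t => norm_nonneg _) hb
    have h0 : Tendsto (fun t => ‖d * f t - d‖ * ‖d‖) atTop (𝓝 (0 * ‖d‖)) :=
      (hcai₂ d hd).mul_const ‖d‖
    rw [zero_mul] at h0
    have h1 := (Real.continuous_sqrt.tendsto 0).comp h0
    simpa only [Function.comp_def, Real.sqrt_zero] using h1
  have decayL : ∀ d : B, d ∈ D →
      Tendsto (fun t => ‖(1 - (e t : Unitization ℂ B)) * (d : Unitization ℂ B)‖) atTop (𝓝 0) := by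
    intro d hd
    have hb : ∀ t, ‖(1 - (e t : Unitization ℂ B)) * (d : Unitization ℂ B)‖
        ≤ Real.sqrt (‖star d * f t - star d‖ * ‖d‖) := by
      intro t
      rw [← Real.sqrt_sq (norm_nonneg ((1 - (e t : Unitization ℂ B)) * (d : Unitization ℂ B)))]
      apply Real.sqrt_le_sqrt
      set u : Unitization ℂ B := 1 - (e t : Unitization ℂ B) with hu
      have heq : star (u * (d : Unitization ℂ B)) * (u * (d : Unitization ℂ B))
          = star (d : Unitization ℂ B) * (star u * u) * (d : Unitization ℂ B) := by
        rw [star_mul]; noncomm_ring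
      have h0 : (0 : Unitization ℂ B)
          ≤ star (d : Unitization ℂ B) * (star u * u) * (d : Unitization ℂ B) :=
        star_left_conjugate_nonneg (star_mul_self_nonneg u) _
      have hle : star (d : Unitization ℂ B) * (star u * u) * (d : Unitization ℂ B)
          ≤ star (d : Unitization ℂ B) * (1 - ((f t : B) : Unitization ℂ B))
            * (d : Unitization ℂ B) :=
        star_left_conjugate_le_conjugate (key t).1 _
      have h1 : ‖u * (d : Unitization ℂ B)‖ ^ 2
          = ‖star (d : Unitization ℂ B) * (star u * u) * (d : Unitization ℂ B)‖ := by
        rw [← heq, CStarRing.norm_star_mul_self, pow_two]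
      rw [h1]
      calc ‖star (d : Unitization ℂ B) * (star u * u) * (d : Unitization ℂ B)‖
          ≤ ‖star (d : Unitization ℂ B) * (1 - ((f t : B) : Unitization ℂ B))
            * (d : Unitization ℂ B)‖ :=
            CStarAlgebra.norm_le_norm_of_nonneg_of_le h0 hle
        _ ≤ ‖star (d : Unitization ℂ B) * (1 - ((f t : B) : Unitization ℂ B))‖
            * ‖(d : Unitization ℂ B)‖ := norm_mul_le _ _
        _ = ‖star d * f t - star d‖ * ‖d‖ := by
            rw [show star (d : Unitization ℂ B) * (1 - ((f t : B) : Unitization ℂ B))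
                = ((star d - star d * f t : B) : Unitization ℂ B) by
              rw [Unitization.inr_sub, Unitization.inr_mul, Unitization.inr_star]; noncomm_ring]
            rw [Unitization.norm_inr, Unitization.norm_inr, norm_sub_rev]
    apply squeeze_zero (fun t => norm_nonneg _) hb
    have h0 : Tendsto (fun t => ‖star d * f t - star d‖ * ‖d‖) atTop (𝓝 (0 * ‖d‖)) :=
      (hcai₂ (star d) (star_mem hd)).mul_const ‖d‖
    rw [zero_mul] at h0
    have h1 := (Real.continuous_sqrt.tendsto 0).comp h0
    simpa only [Function.comp_def, Real.sqrt_zero] using h1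
  -- membership lemmas for S
  have hzero : (0 : B) ∈ S := by
    simp only [hSdef, Set.mem_setOf_eq, mul_zero, zero_mul, sub_zero, zero_sub, zero_mul,
      mul_zero]
    simpa using (tendsto_const_nhds : Tendsto (fun _ : Λ => (0:ℝ)) atTop (𝓝 0))
  have hadd : ∀ y z : B, y ∈ S → z ∈ S → y + z ∈ S := by
    intro y z hy hz
    simp only [hSdef, Set.mem_setOf_eq] at hy hz ⊢
    apply squeeze_zero (fun t => norm_nonneg _)
      (g := fun t => ‖y - e t * y - y * e t + e t * y * e t‖
        + ‖z - e t * z - z * e t + e t * z * e t‖)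
    · intro t
      have heq : (y + z) - e t * (y + z) - (y + z) * e t + e t * (y + z) * e t
          = (y - e t * y - y * e t + e t * y * e t) + (z - e t * z - z * e t + e t * z * e t) := by
        noncomm_ring
      rw [heq]
      exact norm_add_le _ _
    · simpa using hy.add hz
  have hsmul : ∀ (c : ℂ) (z : B), z ∈ S → c • z ∈ S := by
    intro c z hz
    simp only [hSdef, Set.mem_setOf_eq] at hz ⊢
    have heq : ∀ t, (c • z) - e t * (c • z) - (c • z) * e t + e t * (c • z) * e t
        = c • (z - e t * z - z * e t + e t * z * e t) := by
      intro t
      simp only [mul_smul_comm, smul_mul_assoc, smul_sub, smul_add]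
    simp only [heq, norm_smul]
    simpa using hz.const_mul ‖c‖
  have hgen1 : ∀ b d : B, d ∈ D → b * d ∈ S := by
    intro b d hd
    simp only [hSdef, Set.mem_setOf_eq]
    apply squeeze_zero (fun t => norm_nonneg _)
      (g := fun t => ‖b‖ * ‖(d : Unitization ℂ B) * (1 - (e t : Unitization ℂ B))‖)
    · intro t
      rw [hGnorm]
      have heq : (1 - (e t : Unitization ℂ B)) * ((b * d : B) : Unitization ℂ B)
          * (1 - (e t : Unitization ℂ B))
          = ((1 - (e t : Unitization ℂ B)) * (b : Unitization ℂ B))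
            * ((d : Unitization ℂ B) * (1 - (e t : Unitization ℂ B))) := by
        rw [Unitization.inr_mul]; noncomm_ring
      rw [heq]
      have h1 : ‖(1 - (e t : Unitization ℂ B)) * (b : Unitization ℂ B)‖ ≤ ‖b‖ := by
        calc ‖(1 - (e t : Unitization ℂ B)) * (b : Unitization ℂ B)‖
            ≤ ‖1 - (e t : Unitization ℂ B)‖ * ‖(b : Unitization ℂ B)‖ := norm_mul_le _ _
          _ ≤ 1 * ‖(b : Unitization ℂ B)‖ :=
              mul_le_mul_of_nonneg_right (key t).2.2 (norm_nonneg _)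
          _ = ‖b‖ := by rw [one_mul, Unitization.norm_inr]
      calc ‖((1 - (e t : Unitization ℂ B)) * (b : Unitization ℂ B))
            * ((d : Unitization ℂ B) * (1 - (e t : Unitization ℂ B)))‖
          ≤ ‖(1 - (e t : Unitization ℂ B)) * (b : Unitization ℂ B)‖
            * ‖(d : Unitization ℂ B) * (1 - (e t : Unitization ℂ B))‖ := norm_mul_le _ _
        _ ≤ ‖b‖ * ‖(d : Unitization ℂ B) * (1 - (e t : Unitization ℂ B))‖ :=
            mul_le_mul_of_nonneg_right h1 (norm_nonneg _)
    · simpa using (decayR d hd).const_mul ‖b‖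
  have hgen2 : ∀ b d : B, d ∈ D → d * b ∈ S := by
    intro b d hd
    simp only [hSdef, Set.mem_setOf_eq]
    apply squeeze_zero (fun t => norm_nonneg _)
      (g := fun t => ‖(1 - (e t : Unitization ℂ B)) * (d : Unitization ℂ B)‖ * ‖b‖)
    · intro t
      rw [hGnorm]
      have heq : (1 - (e t : Unitization ℂ B)) * ((d * b : B) : Unitization ℂ B)
          * (1 - (e t : Unitization ℂ B))
          = ((1 - (e t : Unitization ℂ B)) * (d : Unitization ℂ B))
            * ((b : Unitization ℂ B) * (1 - (e t : Unitization ℂ B))) := by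
        rw [Unitization.inr_mul]; noncomm_ring
      rw [heq]
      have h1 : ‖(b : Unitization ℂ B) * (1 - (e t : Unitization ℂ B))‖ ≤ ‖b‖ := by
        calc ‖(b : Unitization ℂ B) * (1 - (e t : Unitization ℂ B))‖
            ≤ ‖(b : Unitization ℂ B)‖ * ‖1 - (e t : Unitization ℂ B)‖ := norm_mul_le _ _
          _ ≤ ‖(b : Unitization ℂ B)‖ * 1 :=
              mul_le_mul_of_nonneg_left (key t).2.2 (norm_nonneg _)
          _ = ‖b‖ := by rw [mul_one, Unitization.norm_inr]
      calc ‖((1 - (e t : Unitization ℂ B)) * (d : Unitization ℂ B))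
            * ((b : Unitization ℂ B) * (1 - (e t : Unitization ℂ B)))‖
          ≤ ‖(1 - (e t : Unitization ℂ B)) * (d : Unitization ℂ B)‖
            * ‖(b : Unitization ℂ B) * (1 - (e t : Unitization ℂ B))‖ := norm_mul_le _ _
        _ ≤ ‖(1 - (e t : Unitization ℂ B)) * (d : Unitization ℂ B)‖ * ‖b‖ :=
            mul_le_mul_of_nonneg_left h1 (norm_nonneg _)
    · simpa using (decayL d hd).mul_const ‖b‖
  -- closure stability
  have hSclosure : ∀ z ∈ closure S, z ∈ S := by
    intro z hz
    simp only [hSdef, Set.mem_setOf_eq]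
    rw [Metric.tendsto_nhds]
    intro δ hδ
    obtain ⟨y, hyS, hzy⟩ := Metric.mem_closure_iff.mp hz (δ/2) (by linarith)
    simp only [hSdef, Set.mem_setOf_eq] at hyS
    have hev : ∀ᶠ t in atTop, ‖y - e t * y - y * e t + e t * y * e t‖ < δ/2 := by
      have h1 := Metric.tendsto_nhds.mp hyS (δ/2) (by linarith)
      filter_upwards [h1] with t ht
      rwa [Real.dist_0_eq_abs, abs_of_nonneg (norm_nonneg _)] at ht
    filter_upwards [hev] with t ht
    rw [Real.dist_0_eq_abs, abs_of_nonneg (norm_nonneg _)]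
    have hdiff : z - e t * z - z * e t + e t * z * e t
        = ((z - y) - e t * (z - y) - (z - y) * e t + e t * (z - y) * e t)
          + (y - e t * y - y * e t + e t * y * e t) := by
      noncomm_ring
    have hzy' : ‖z - y‖ < δ/2 := by rwa [← dist_eq_norm]
    calc ‖z - e t * z - z * e t + e t * z * e t‖
        ≤ ‖(z - y) - e t * (z - y) - (z - y) * e t + e t * (z - y) * e t‖
          + ‖y - e t * y - y * e t + e t * y * e t‖ := by rw [hdiff]; exact norm_add_le _ _
      _ ≤ ‖z - y‖ + ‖y - e t * y - y * e t + e t * y * e t‖ :=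
          add_le_add_left (hGbound t _) _
      _ < δ/2 + δ/2 := by exact add_lt_add hzy' ht
      _ = δ := by ring
  -- the span is contained in S, together with its star
  have hspan : ∀ z ∈ (Submodule.span ℂ {w : B | ∃ b : B, ∃ d ∈ D, w = b * d} : Submodule ℂ B),
      z ∈ S ∧ star z ∈ S := by
    intro z hz
    induction hz using Submodule.span_induction with
    | mem w hw =>
      obtain ⟨b, d, hd, rfl⟩ := hw
      refine ⟨hgen1 b d hd, ?_⟩
      rw [star_mul]
      exact hgen2 (star b) (star d) (star_mem hd)
    | zero => exact ⟨hzero, by rw [star_zero]; exact hzero⟩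
    | add w₁ w₂ h₁ h₂ ih₁ ih₂ =>
      exact ⟨hadd _ _ ih₁.1 ih₂.1, by rw [star_add]; exact hadd _ _ ih₁.2 ih₂.2⟩
    | smul c w h ih =>
      exact ⟨hsmul c w ih.1, by rw [star_smul]; exact hsmul _ _ ih.2⟩
  have hLS : leftIdealOf D ⊆ S := by
    intro z hz
    exact hSclosure z (closure_mono (fun w hw => (hspan w hw).1) hz)
  have hLstarS : star '' leftIdealOf D ⊆ S := by
    rintro _ ⟨z, hz, rfl⟩
    have h1 : star z ∈ closure (star ''
        ((Submodule.span ℂ {w : B | ∃ b : B, ∃ d ∈ D, w = b * d} : Submodule ℂ B) : Set B)) :=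
      image_closure_subset_closure_image continuous_star ⟨z, hz, rfl⟩
    refine hSclosure _ (closure_mono ?_ h1)
    rintro _ ⟨w, hw, rfl⟩
    exact (hspan w hw).2
  have hsum : leftIdealOf D + star '' leftIdealOf D ⊆ S := by
    rintro _ ⟨a, ha, b, hb, rfl⟩
    exact hadd _ _ (hLS ha) (hLstarS hb)
  exact hSclosure x (closure_mono hsum hx)
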